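/- The number of d-equivalence classes of strict linear orders on A equals Σ_{i=1}^{m} (m-1)!/(m-i)!, and this number is strictly less than (m-1)!·e, where e denotes Euler's number. -/

import Mathlib

open Finset Filter

/-- A vote (strict linear order) on `m` alternatives, encoded by its position map:
`v x` is the position of alternative `x`, position `0` being the top.
`v` ranks `x` above `y` iff `v x < v y`. -/
abbrev Vote (m : ℕ) := Equiv.Perm (Fin m)

/-- A profile is a list of `n` votes, one per agent. -/
abbrev Profile (m n : ℕ) := Fin n → Vote m

/-- `n_{xy}[P]`: the number of votes in `P` ranking `x` above `y`. -/
def nAbove {m n : ℕ} (P : Profile m n) (x y : Fin m) : ℕ :=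
  (Finset.univ.filter (fun i => P i x < P i y)).card

/-- `adv[P](x,y) = max (0, n_{xy} - n_{yx})` (truncated subtraction on `ℕ`). -/
def adv {m n : ℕ} (P : Profile m n) (x y : Fin m) : ℕ :=
  nAbove P x y - nAbove P y x

/-- The Tideman score `Sc_T[P](a) = Σ_{b ≠ a} adv[P](b,a)`. -/
def ScT {m n : ℕ} (P : Profile m n) (a : Fin m) : ℕ :=
  ∑ b ∈ Finset.univ.filter (fun b => b ≠ a), adv P b a

/-- The Dodgson Quick score `Sc_Q[P](a) = Σ_{b ≠ a} ⌈adv[P](b,a)/2⌉`. -/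
def ScQ {m n : ℕ} (P : Profile m n) (a : Fin m) : ℕ :=
  ∑ b ∈ Finset.univ.filter (fun b => b ≠ a), (adv P b a + 1) / 2

/-- `a` is a Condorcet-tie winner of `P` iff `adv[P](b,a) = 0` for all `b ≠ a`. -/
def CondorcetTieWinner {m n : ℕ} (P : Profile m n) (a : Fin m) : Prop :=
  ∀ b, b ≠ a → adv P b a = 0

/-- `a` is a Condorcet winner of `P` iff `adv[P](a,b) > 0` for all `b ≠ a`. -/
def CondorcetWinner {m n : ℕ} (P : Profile m n) (a : Fin m) : Prop :=
  ∀ b, b ≠ a → 0 < adv P a b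

/-- `w` is obtained from the vote `v` by one swap of neighbouring alternatives
(the alternatives at consecutive positions `p` and `p+1` are exchanged). -/
def AdjSwapVote {m : ℕ} (v w : Vote m) : Prop :=
  ∃ p q : Fin m, (q : ℕ) = (p : ℕ) + 1 ∧ w = v.trans (Equiv.swap p q)

/-- `Q` is obtained from the profile `P` by one adjacent swap in one vote. -/
def AdjSwap {m n : ℕ} (P Q : Profile m n) : Prop :=
  ∃ i : Fin n, AdjSwapVote (P i) (Q i) ∧ ∀ j, j ≠ i → Q j = P j

/-- `Reach r k P Q`: `Q` can be obtained from `P` by exactly `k` steps of `r`. -/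
def Reach {α : Type*} (r : α → α → Prop) : ℕ → α → α → Prop
  | 0, P, Q => P = Q
  | (k+1), P, Q => ∃ R, r P R ∧ Reach r k R Q

/-- The Dodgson score `Sc_D[P](a)`: the minimum number of adjacent swaps needed to
transform `P` into a profile in which `a` is a Condorcet-tie winner. -/
noncomputable def ScD {m n : ℕ} (P : Profile m n) (a : Fin m) : ℕ :=
  sInf {k | ∃ Q, Reach AdjSwap k P Q ∧ CondorcetTieWinner Q a}

/-- Variant of the Dodgson score requiring `a` to become a Condorcet winner. -/
noncomputable def ScD' {m n : ℕ} (P : Profile m n) (a : Fin m) : ℕ :=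
  sInf {k | ∃ Q, Reach AdjSwap k P Q ∧ CondorcetWinner Q a}

/- Voting situations: multisets of votes.  Scores depend only on the voting
situation of a profile, so we define them directly on multisets. -/

/-- Number of votes in the voting situation `S` ranking `x` above `y`. -/
def snAbove {m : ℕ} (S : Multiset (Vote m)) (x y : Fin m) : ℕ :=
  (S.filter (fun v => v x < v y)).card

def sadv {m : ℕ} (S : Multiset (Vote m)) (x y : Fin m) : ℕ :=
  snAbove S x y - snAbove S y x

/-- Tideman score of a voting situation. -/
def sScT {m : ℕ} (S : Multiset (Vote m)) (a : Fin m) : ℕ :=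
  ∑ b ∈ Finset.univ.filter (fun b => b ≠ a), sadv S b a

/-- Dodgson Quick score of a voting situation. -/
def sScQ {m : ℕ} (S : Multiset (Vote m)) (a : Fin m) : ℕ :=
  ∑ b ∈ Finset.univ.filter (fun b => b ≠ a), (sadv S b a + 1) / 2

def sCondorcetTieWinner {m : ℕ} (S : Multiset (Vote m)) (a : Fin m) : Prop :=
  ∀ b, b ≠ a → sadv S b a = 0

/-- One adjacent swap applied to one vote of a voting situation. -/
def sAdjSwap {m : ℕ} (S T : Multiset (Vote m)) : Prop :=
  ∃ v ∈ S, ∃ w, AdjSwapVote v w ∧ T = w ::ₘ S.erase v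

/-- Dodgson score of a voting situation. -/
noncomputable def sScD {m : ℕ} (S : Multiset (Vote m)) (a : Fin m) : ℕ :=
  sInf {k | ∃ T, Reach sAdjSwap k S T ∧ sCondorcetTieWinner T a}

/-- `a` is a Tideman winner (minimal Tideman score). -/
def sTWinner {m : ℕ} (S : Multiset (Vote m)) (a : Fin m) : Prop :=
  ∀ b, sScT S a ≤ sScT S b

/-- `a` is a DQ winner (minimal DQ score). -/
def sQWinner {m : ℕ} (S : Multiset (Vote m)) (a : Fin m) : Prop :=
  ∀ b, sScQ S a ≤ sScQ S b

/-- `a` is a Dodgson winner (minimal Dodgson score). -/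
def sDWinner {m : ℕ} (S : Multiset (Vote m)) (a : Fin m) : Prop :=
  ∀ b, sScD S a ≤ sScD S b

/-- `v` and `w` are `d`-equivalent: for some position `i`, `d` is the `i`-th ranked
alternative of both `v` and `w`, and the sequences of the top `i` ranked
alternatives of `v` and `w` coincide.  (`v.symm j` is the alternative
ranked at position `j`.) -/
def dEquiv {m : ℕ} (d : Fin m) (v w : Vote m) : Prop :=
  ∃ i : Fin m, v.symm i = d ∧ w.symm i = d ∧ ∀ j : Fin m, j ≤ i → v.symm j = w.symm j

section AuxCount

variable {m : ℕ} (d : Fin m)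

lemma sigma_fin_fun_ext {X : Type*} {p q : Σ i : Fin m, (Fin (i : ℕ) → X)} (h1 : p.1 = q.1)
    (h2 : ∀ k (hk : k < (p.1 : ℕ)) (hk' : k < (q.1 : ℕ)), p.2 ⟨k, hk⟩ = q.2 ⟨k, hk'⟩) :
    p = q := by
  obtain ⟨a, f⟩ := p
  obtain ⟨b, g⟩ := q
  obtain rfl : a = b := h1
  have hfg : f = g := by
    funext j
    have := h2 (j : ℕ) j.isLt j.isLt
    simpa using this
  rw [hfg]

lemma sigma_fin_fun_eval {X : Type*} {p q : Σ i : Fin m, (Fin (i : ℕ) → X)} (h : p = q)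
    (k : ℕ) (hk : k < (p.1 : ℕ)) (hk' : k < (q.1 : ℕ)) : p.2 ⟨k, hk⟩ = q.2 ⟨k, hk'⟩ := by
  subst h
  rfl

/-- The invariant characterizing the `d`-equivalence class of a vote: the position
of `d` together with the sequence of alternatives ranked strictly above `d`. -/
def GG (d : Fin m) (v : Vote m) : Σ i : Fin m, (Fin (i : ℕ) → {x : Fin m // x ≠ d}) :=
  ⟨v d, fun j => ⟨v.symm ⟨(j : ℕ), j.isLt.trans (v d).isLt⟩, by
    intro h
    have h2 : (⟨(j : ℕ), j.isLt.trans (v d).isLt⟩ : Fin m) = v d := by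
      have := congrArg v h
      simpa using this
    have h3 := congrArg Fin.val h2
    simp only at h3
    have := j.isLt
    omega⟩⟩

lemma symm_eq_iff (v : Vote m) (i : Fin m) : v.symm i = d ↔ i = v d := by
  constructor
  · intro h; have := congrArg v h; simpa using this
  · intro h; subst h; simp

lemma dEquiv_iff_GG (v w : Vote m) : dEquiv d v w ↔ GG d v = GG d w := by
  constructor
  · rintro ⟨i, h1, h2, h3⟩
    have hv : i = v d := (symm_eq_iff d v i).mp h1
    have hw : i = w d := (symm_eq_iff d w i).mp h2
    refine sigma_fin_fun_ext (hv.symm.trans hw) ?_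
    intro k hk hk'
    refine Subtype.ext ?_
    show v.symm _ = w.symm _
    have hle : (⟨k, hk.trans (v d).isLt⟩ : Fin m) ≤ i := by
      rw [Fin.le_def, hv]
      exact Nat.le_of_lt hk
    have := h3 ⟨k, hk.trans (v d).isLt⟩ hle
    convert this using 2
  · intro h
    have hfst : v d = w d := congrArg Sigma.fst h
    refine ⟨v d, by simp, by rw [hfst]; simp, ?_⟩
    intro j hj
    rcases eq_or_lt_of_le hj with h' | h'
    · subst h'
      rw [(symm_eq_iff d v _).mpr rfl, (symm_eq_iff d w _).mpr hfst]
    · have hj' : (j : ℕ) < ((v d : Fin m) : ℕ) := h'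
      have hj'' : (j : ℕ) < ((w d : Fin m) : ℕ) := by rw [← hfst]; exact hj'
      have := congrArg Subtype.val (sigma_fin_fun_eval h (j : ℕ) hj' hj'')
      simpa [GG] using this

lemma dEquiv_refl (v : Vote m) : dEquiv d v v := ⟨v d, by simp, by simp, fun _ _ => rfl⟩

lemma class_eq_iff (v v' : Vote m) :
    {w | dEquiv d v w} = {w | dEquiv d v' w} ↔ GG d v = GG d v' := by
  constructor
  · intro h
    have hmem : v' ∈ {w | dEquiv d v' w} := dEquiv_refl d v'
    rw [← h] at hmem
    exact (dEquiv_iff_GG d v v').mp hmem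
  · intro h
    ext u
    simp only [Set.mem_setOf_eq, dEquiv_iff_GG, h]

lemma GG_snd_injective (v : Vote m) : Function.Injective (GG d v).2 := by
  intro a b hab
  have h1 := congrArg Subtype.val hab
  have h2 : (⟨(a : ℕ), a.isLt.trans ((v d : Fin m)).isLt⟩ : Fin m) =
      ⟨(b : ℕ), b.isLt.trans ((v d : Fin m)).isLt⟩ := v.symm.injective h1
  exact Fin.ext (by simpa using h2)

lemma range_GG : Set.range (GG d) = {p | Function.Injective p.2} := by
  ext ⟨i, e⟩
  simp only [Set.mem_range, Set.mem_setOf_eq]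
  constructor
  · rintro ⟨v, hv⟩
    have hGG := GG_snd_injective d v
    rw [hv] at hGG
    exact hGG
  · intro he
    have him : (i : ℕ) + 1 ≤ m := i.isLt
    set f : Fin ((i : ℕ) + 1) → Fin m := Fin.snoc (fun j => (e j).1) d with hf
    have hfinj : Function.Injective f := by
      intro a b hab
      induction a using Fin.lastCases with
      | last =>
        induction b using Fin.lastCases with
        | last => rfl
        | cast b =>
          rw [hf, Fin.snoc_last, Fin.snoc_castSucc] at hab
          exact absurd hab.symm (e b).2
      | cast a =>
        induction b using Fin.lastCases with
        | last =>
          rw [hf, Fin.snoc_last, Fin.snoc_castSucc] at hab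
          exact absurd hab (e a).2
        | cast b =>
          rw [hf, Fin.snoc_castSucc, Fin.snoc_castSucc] at hab
          rw [he (Subtype.ext hab)]
    classical
    set E : {x : Fin m // (x : ℕ) < (i : ℕ) + 1} ≃ {x : Fin m // ∃ j, f j = x} :=
      Equiv.ofBijective (fun x => ⟨f ⟨(x.1 : ℕ), x.2⟩, ⟨_, rfl⟩⟩) (by
        constructor
        · intro x y hxy
          have := hfinj (Subtype.ext_iff.mp hxy)
          exact Subtype.ext (Fin.ext (by simpa using this))
        · rintro ⟨x, j, hj⟩
          refine ⟨⟨⟨(j : ℕ), j.isLt.trans_le him⟩, j.isLt⟩, ?_⟩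
          refine Subtype.ext ?_
          show f _ = x
          rw [← hj]) with hE
    set σ : Equiv.Perm (Fin m) := E.extendSubtype with hσ
    have hσ_app : ∀ (x : Fin m) (hx : (x : ℕ) < (i : ℕ) + 1), σ x = f ⟨(x : ℕ), hx⟩ := by
      intro x hx
      rw [hσ, E.extendSubtype_apply_of_mem x hx, hE]
      rfl
    have hσi : σ i = d := by
      rw [hσ_app i (Nat.lt_succ_self _)]
      have h5 : (⟨(i : ℕ), Nat.lt_succ_self _⟩ : Fin ((i : ℕ) + 1)) = Fin.last _ := rfl
      rw [h5, hf, Fin.snoc_last]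
    refine ⟨σ.symm, ?_⟩
    have hvd : (GG d σ.symm).1 = i := by
      show σ.symm d = i
      rw [← hσi, Equiv.symm_apply_apply]
    refine sigma_fin_fun_ext hvd ?_
    intro k hk hk'
    refine Subtype.ext ?_
    show σ.symm.symm _ = ((e ⟨k, hk'⟩ : {x : Fin m // x ≠ d}) : Fin m)
    have hcast : ((σ.symm d : Fin m) : ℕ) = (i : ℕ) := congrArg Fin.val hvd
    have hklt : (k : ℕ) < (i : ℕ) + 1 := Nat.lt_succ_of_lt hk'
    have hmk : (⟨k, hk.trans (σ.symm d).isLt⟩ : Fin m) = ⟨k, hklt.trans_le him⟩ := rfl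
    rw [Equiv.symm_symm, hmk, hσ_app _ hklt]
    have h6 : (⟨k, hklt⟩ : Fin ((i : ℕ) + 1)) = Fin.castSucc ⟨k, hk'⟩ := Fin.ext rfl
    rw [show (⟨(((⟨k, hklt.trans_le him⟩ : Fin m) : Fin m) : ℕ), hklt⟩ : Fin ((i : ℕ) + 1)) = Fin.castSucc ⟨k, hk'⟩ from Fin.ext rfl]
    rw [hf, Fin.snoc_castSucc]

/-- Repackaging: injective sequences as embeddings. -/
def injSigmaEquiv :
    {p : Σ i : Fin m, (Fin (i : ℕ) → {x : Fin m // x ≠ d}) // Function.Injective p.2} ≃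
      Σ i : Fin m, (Fin (i : ℕ) ↪ {x : Fin m // x ≠ d}) where
  toFun p := ⟨p.1.1, ⟨p.1.2, p.2⟩⟩
  invFun q := ⟨⟨q.1, q.2⟩, q.2.injective⟩
  left_inv p := rfl
  right_inv q := rfl

lemma card_ne_d : Fintype.card {x : Fin m // x ≠ d} = m - 1 := by
  have := Fintype.card_subtype_compl (fun x : Fin m => x = d)
  simpa [Fintype.card_subtype_eq] using this

lemma ncard_classes :
    Set.ncard {C : Set (Vote m) | ∃ v : Vote m, C = {w | dEquiv d v w}} =
      ∑ k ∈ Finset.range m, Nat.descFactorial (m - 1) k := by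
  classical
  have hset : {C : Set (Vote m) | ∃ v : Vote m, C = {w | dEquiv d v w}} =
      Set.range (fun v : Vote m => {w | dEquiv d v w}) := by
    ext C
    simp [eq_comm]
  rw [hset, ← Nat.card_coe_set_eq]
  have hker : Setoid.ker (fun v : Vote m => {w | dEquiv d v w}) = Setoid.ker (GG d) :=
    Setoid.ext fun v v' => class_eq_iff d v v'
  have h1 : Nat.card (Set.range (fun v : Vote m => {w | dEquiv d v w})) =
      Nat.card (Set.range (GG d)) := by
    rw [← Nat.card_congr (Setoid.quotientKerEquivRange (fun v : Vote m => {w | dEquiv d v w})),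
      hker, Nat.card_congr (Setoid.quotientKerEquivRange (GG d))]
  rw [h1, range_GG]
  have h2 : Nat.card {p : Σ i : Fin m, (Fin (i : ℕ) → {x : Fin m // x ≠ d}) //
      Function.Injective p.2} = ∑ k ∈ Finset.range m, Nat.descFactorial (m - 1) k := by
    rw [Nat.card_congr (injSigmaEquiv d), Nat.card_eq_fintype_card, Fintype.card_sigma]
    rw [← Fin.sum_univ_eq_sum_range (fun k => Nat.descFactorial (m - 1) k) m]
    refine Finset.sum_congr rfl fun i _ => ?_
    rw [Fintype.card_embedding_eq, card_ne_d, Fintype.card_fin]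
  rw [← h2]
  rfl

end AuxCount

/-- The number of `d`-equivalence classes of strict linear orders on the `m`
alternatives equals `Σ_{i=1}^{m} (m-1)!/(m-i)!`, and is strictly less than
`(m-1)! · e`. -/
theorem stmt_0 {m : ℕ} (hm : 1 ≤ m) (d : Fin m) :
    Set.ncard {C : Set (Vote m) | ∃ v : Vote m, C = {w | dEquiv d v w}} =
      ∑ i ∈ Finset.Icc 1 m, Nat.factorial (m - 1) / Nat.factorial (m - i) ∧
    (Set.ncard {C : Set (Vote m) | ∃ v : Vote m, C = {w | dEquiv d v w}} : ℝ) <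
      Nat.factorial (m - 1) * Real.exp 1 := by
  have key := ncard_classes d
  have hsum : ∑ i ∈ Finset.Icc 1 m, Nat.factorial (m - 1) / Nat.factorial (m - i) =
      ∑ k ∈ Finset.range m, Nat.descFactorial (m - 1) k := by
    rw [← Finset.Ico_add_one_right_eq_Icc, Finset.sum_Ico_eq_sum_range]
    refine Finset.sum_congr (by norm_num) fun k hk => ?_
    have hk' : k < m := Finset.mem_range.mp hk
    rw [Nat.descFactorial_eq_div (by omega : k ≤ m - 1)]
    congr 2
    omega
  refine ⟨by rw [key, hsum], ?_⟩
  rw [key]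
  have hcast : ((∑ k ∈ Finset.range m, Nat.descFactorial (m - 1) k : ℕ) : ℝ) =
      ∑ k ∈ Finset.range m, ((Nat.factorial (m - 1) : ℝ) / (Nat.factorial (m - 1 - k) : ℝ)) := by
    push_cast
    refine Finset.sum_congr rfl fun k hk => ?_
    have hk' : k < m := Finset.mem_range.mp hk
    have hfac := Nat.factorial_mul_descFactorial (by omega : k ≤ m - 1)
    rw [eq_div_iff (by exact_mod_cast Nat.factorial_ne_zero (m - 1 - k))]
    rw [mul_comm]
    exact_mod_cast hfac
  rw [hcast]
  have hrefl : ∑ k ∈ Finset.range m, ((Nat.factorial (m - 1) : ℝ) / (Nat.factorial (m - 1 - k) : ℝ))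
      = ∑ k ∈ Finset.range m, ((Nat.factorial (m - 1) : ℝ) / (Nat.factorial k : ℝ)) :=
    Finset.sum_range_reflect (fun k => (Nat.factorial (m - 1) : ℝ) / (Nat.factorial k : ℝ)) m
  rw [hrefl]
  have hmul : ∑ k ∈ Finset.range m, ((Nat.factorial (m - 1) : ℝ) / (Nat.factorial k : ℝ))
      = (Nat.factorial (m - 1) : ℝ) * ∑ k ∈ Finset.range m, (1 / (Nat.factorial k : ℝ)) := by
    rw [Finset.mul_sum]
    exact Finset.sum_congr rfl fun k _ => by rw [mul_one_div]
  rw [hmul]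
  refine mul_lt_mul_of_pos_left ?_ (by exact_mod_cast Nat.factorial_pos (m - 1))
  calc ∑ k ∈ Finset.range m, (1 / (Nat.factorial k : ℝ))
      < ∑ k ∈ Finset.range (m + 1), (1 / (Nat.factorial k : ℝ)) := by
        rw [Finset.sum_range_succ]
        have : (0 : ℝ) < 1 / (Nat.factorial m : ℝ) := by
          positivity
        linarith
    _ ≤ Real.exp 1 := by
        have := Real.sum_le_exp_of_nonneg (zero_le_one) (m + 1)
        simpa using this
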